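/- Let u be a real q-convex function on an open set ω ⊆ ℝⁿ and let φ : ℝ → ℝ be strictly increasing and strictly convex, extended to [−∞,+∞) by φ(−∞) := lim_{t→−∞} φ(t) ∈ [−∞,+∞). Then φ ∘ u is real q-convex on ω. -/

import Mathlib

open Metric Set Filter

noncomputable section

/-- An upper semicontinuous function `u : ω → [−∞,+∞)` (EReal-valued, never `⊤` on `ω`)
is *real q-convex* on `ω` if it satisfies the local maximum property with respect to
affine linear functions on real `(q+1)`-dimensional affine subspaces. -/
def RealQConvexOn {E : Type*} [NormedAddCommGroup E] [NormedSpace ℝ E]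
    (q : ℕ) (u : E → EReal) (ω : Set E) : Prop :=
  (∀ x ∈ ω, u x ≠ ⊤) ∧ UpperSemicontinuousOn u ω ∧
    ∀ P : AffineSubspace ℝ E, Module.finrank ℝ P.direction = q + 1 →
      ∀ (c : E) (r : ℝ), 0 < r → closure (Metric.ball c r) ⊆ ω →
        ∀ l : E →ᵃ[ℝ] ℝ,
          (∀ x ∈ Metric.sphere c r ∩ (P : Set E), u x ≤ (l x : EReal)) →
          ∀ x ∈ Metric.closedBall c r ∩ (P : Set E), u x ≤ (l x : EReal)

open Classical in
/-- Extension of `φ : ℝ → ℝ` to `[−∞,+∞)` by `φ(−∞) := lim_{t→−∞} φ(t)`. -/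
def erealExt (φ : ℝ → ℝ) : EReal → EReal := fun t =>
  if t = ⊥ then ⨅ s : ℝ, (φ s : EReal)
  else if t = ⊤ then ⊤
  else ((φ t.toReal : ℝ) : EReal)

/-! ### Auxiliary lemmas -/

lemma exists_affine_above {φ : ℝ → ℝ} (hφm : StrictMono φ) (hφc : StrictConvexOn ℝ Set.univ φ)
    {t0 y0 : ℝ} (hy : y0 < φ t0) :
    ∃ α β : ℝ, 0 < α ∧ α * y0 + β < t0 ∧ ∀ s y : ℝ, φ s ≤ y → s ≤ α * y + β := by
  have hconv : ConvexOn ℝ Set.univ φ := hφc.convexOn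
  have hcont : Continuous φ := by
    rw [← continuousOn_univ]; exact hconv.continuousOn isOpen_univ
  obtain ⟨s2, hs2lt, hs2⟩ : ∃ s2, s2 < t0 ∧ y0 < φ s2 := by
    have hmem : φ ⁻¹' Set.Ioi y0 ∈ nhds t0 :=
      hcont.continuousAt.preimage_mem_nhds (Ioi_mem_nhds hy)
    obtain ⟨ε, hε, hball⟩ := Metric.mem_nhds_iff.mp hmem
    refine ⟨t0 - ε/2, by linarith, ?_⟩
    have : t0 - ε/2 ∈ Metric.ball t0 ε := by
      rw [Metric.mem_ball, Real.dist_eq, abs_of_nonpos (by linarith)]; linarith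
    exact hball this
  obtain ⟨δ, hδ, hδdef⟩ : ∃ δ : ℝ, 0 < δ ∧ δ = (t0 - s2)/2 := ⟨_, by linarith, rfl⟩
  obtain ⟨s1, hs1def⟩ : ∃ s1 : ℝ, s1 = s2 - δ := ⟨_, rfl⟩
  have hs1lt : s1 < s2 := by rw [hs1def]; linarith
  obtain ⟨m, hmdef⟩ : ∃ m : ℝ, m = (φ s2 - φ s1)/δ := ⟨_, rfl⟩
  have hφlt : φ s1 < φ s2 := hφm hs1lt
  have hm : 0 < m := by rw [hmdef]; exact div_pos (by linarith) hδ
  have hs12 : s1 - s2 = -δ := by rw [hs1def]; ring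
  have hmalt : (φ s1 - φ s2)/(s1 - s2) = m := by
    rw [hs12, div_neg, hmdef, ← neg_div, neg_sub]
  have key : ∀ s : ℝ, s ≤ s1 ∨ s2 ≤ s → φ s2 + m * (s - s2) ≤ φ s := by
    intro s hs
    rcases hs with hs | hs
    · have h2 := hconv.secant_mono (a := s2) (x := s) (y := s1) trivial trivial trivial
        (by linarith : s ≠ s2) (by linarith : s1 ≠ s2) hs
      rw [hmalt] at h2
      have := (div_le_iff_of_neg (by linarith : s - s2 < 0)).mp h2
      linarith
    · rcases eq_or_lt_of_le hs with rfl | hs'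
      · simp
      have h2 := hconv.secant_mono (a := s2) (x := s1) (y := s) trivial trivial trivial
        (by linarith : s1 ≠ s2) (by linarith : s ≠ s2) (by linarith)
      rw [hmalt] at h2
      have := (le_div_iff₀ (by linarith : (0:ℝ) < s - s2)).mp h2
      linarith
  have target_eq : ∀ z : ℝ, 1/m * z + (s2 + δ - φ s2/m) = (z - φ s2)/m + (s2 + δ) := by
    intro z; field_simp; ring
  refine ⟨1/m, s2 + δ - φ s2/m, by positivity, ?_, ?_⟩
  · rw [target_eq]
    have : (y0 - φ s2)/m < 0 := div_neg_of_neg_of_pos (by linarith) hm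
    linarith
  · have hstep : ∀ s : ℝ, s ≤ (1/m) * φ s + (s2 + δ - φ s2/m) := by
      intro s
      have hcancel : (m*(s-s2))/m = s - s2 := by field_simp
      rcases le_or_gt s s1 with hs | hs
      · have h1 := key s (Or.inl hs)
        have h5 : (m*(s-s2))/m ≤ (φ s - φ s2)/m := by gcongr <;> linarith
        rw [hcancel] at h5
        rw [target_eq]; linarith
      · rcases le_or_gt s2 s with hs' | hs'
        · have h1 := key s (Or.inr hs')
          have h5 : (m*(s-s2))/m ≤ (φ s - φ s2)/m := by gcongr <;> linarith
          rw [hcancel] at h5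
          rw [target_eq]; linarith
        · have hmono : φ s1 ≤ φ s := (hφm.le_iff_le).mpr hs.le
          have hne : φ s2 - φ s1 ≠ 0 := by linarith
          have hval : (1/m) * φ s1 + (s2 + δ - φ s2/m) = s2 := by
            rw [target_eq, hmdef]
            have hcalc : (φ s1 - φ s2) / ((φ s2 - φ s1)/δ) = -δ := by
              field_simp; ring
            rw [hcalc]; ring
          have h6 : (1/m) * φ s1 + (s2 + δ - φ s2/m) ≤ (1/m) * φ s + (s2 + δ - φ s2/m) := by
            have := mul_le_mul_of_nonneg_left hmono (le_of_lt (by positivity : (0:ℝ) < 1/m))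
            linarith
          rw [hval] at h6; linarith
    intro s y hsy
    have h7 := hstep s
    have h2 : (1/m) * φ s ≤ (1/m) * y :=
      mul_le_mul_of_nonneg_left hsy (by positivity)
    linarith

lemma affine_min_principle {E : Type*} [NormedAddCommGroup E] [NormedSpace ℝ E]
    (P : AffineSubspace ℝ E) (hP : P.direction ≠ ⊥) {c : E} {r : ℝ} (hr : 0 < r)
    (l : E →ᵃ[ℝ] ℝ) (A : EReal)
    (hA : ∀ x ∈ Metric.sphere c r ∩ (P : Set E), A ≤ (l x : EReal))
    {x0 : E} (hx0 : x0 ∈ Metric.closedBall c r ∩ (P : Set E)) : A ≤ (l x0 : EReal) := by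
  obtain ⟨hball, hmem⟩ := hx0
  rw [Metric.mem_closedBall] at hball
  rcases eq_or_lt_of_le hball with heq | hlt
  · exact hA x0 ⟨heq, hmem⟩
  obtain ⟨v, hv, hvne⟩ := Submodule.exists_mem_ne_zero_of_ne_bot hP
  have hvnorm : (0:ℝ) < ‖v‖ := norm_pos_iff.mpr hvne
  set f : ℝ → ℝ := fun t => dist (x0 + t • v) c with hf
  have hfc : Continuous f := by
    apply Continuous.dist ?_ continuous_const
    exact continuous_const.add (continuous_id.smul continuous_const)
  have hf0 : f 0 = dist x0 c := by simp [hf]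
  set T : ℝ := (r + dist x0 c)/‖v‖ + 1 with hT
  have hT0 : 0 < T := by positivity
  have hfT : ∀ t : ℝ, T ≤ |t| → r ≤ f t := by
    intro t ht
    have h1 : dist (x0 + t • v) x0 ≤ f t + dist x0 c := by
      calc dist (x0 + t • v) x0 ≤ dist (x0 + t • v) c + dist c x0 := dist_triangle _ _ _
      _ = f t + dist x0 c := by rw [hf, dist_comm c x0]
    have h2 : dist (x0 + t • v) x0 = |t| * ‖v‖ := by
      rw [dist_eq_norm]; simp [norm_smul, abs_mul]
    have h3 : T * ‖v‖ ≤ |t| * ‖v‖ := by gcongr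
    have h4 : T * ‖v‖ = r + dist x0 c + ‖v‖ := by rw [hT]; field_simp
    nlinarith [dist_nonneg (x := x0) (y := c)]
  obtain ⟨tp, htpmem, htp⟩ : ∃ t ∈ Icc (0:ℝ) T, f t = r := by
    have := intermediate_value_Icc hT0.le hfc.continuousOn (a := 0) (b := T)
    have hmem2 : r ∈ Icc (f 0) (f T) := ⟨by rw [hf0]; exact hlt.le, hfT T (by rw [abs_of_pos hT0])⟩
    obtain ⟨t, ht1, ht2⟩ := this hmem2
    exact ⟨t, ht1, ht2⟩
  obtain ⟨tm, htmmem, htm⟩ : ∃ t ∈ Icc (-T) (0:ℝ), f t = r := by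
    have := intermediate_value_Icc' (by linarith : -T ≤ (0:ℝ)) hfc.continuousOn
    have hmem2 : r ∈ Icc (f 0) (f (-T)) :=
      ⟨by rw [hf0]; exact hlt.le, hfT (-T) (by rw [abs_of_neg (by linarith)]; linarith)⟩
    obtain ⟨t, ht1, ht2⟩ := this hmem2
    exact ⟨t, ht1, ht2⟩
  have htppos : 0 < tp := by
    rcases eq_or_lt_of_le htpmem.1 with h | h
    · exfalso; rw [← h, hf0] at htp; linarith
    · exact h
  have htmneg : tm < 0 := by
    rcases eq_or_lt_of_le htmmem.2 with h | h
    · exfalso; rw [h, hf0] at htm; linarith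
    · exact h
  set a := x0 + tp • v with ha
  set b := x0 + tm • v with hb
  have haP : a ∈ P := by
    rw [ha, add_comm, ← vadd_eq_add]
    exact AffineSubspace.vadd_mem_of_mem_direction (Submodule.smul_mem _ _ hv) hmem
  have hbP : b ∈ P := by
    rw [hb, add_comm, ← vadd_eq_add]
    exact AffineSubspace.vadd_mem_of_mem_direction (Submodule.smul_mem _ _ hv) hmem
  have haS : a ∈ Metric.sphere c r := htp
  have hbS : b ∈ Metric.sphere c r := htm
  set θ : ℝ := tp / (tp - tm) with hθ
  have htptm : 0 < tp - tm := by linarith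
  have hθ0 : 0 ≤ θ := by positivity
  have hθ1 : θ ≤ 1 := by rw [hθ, div_le_one htptm]; linarith
  have hcoeff : (1-θ) * tp + θ * tm = 0 := by rw [hθ]; field_simp; ring
  have hx0eq : (1-θ) • a + θ • b = x0 := by
    rw [ha, hb, smul_add, smul_add, smul_smul, smul_smul]
    have : (1-θ) • x0 + ((1-θ) * tp) • v + (θ • x0 + (θ * tm) • v)
        = ((1-θ) + θ) • x0 + ((1-θ) * tp + θ * tm) • v := by module
    rw [this, hcoeff]
    simp
  have hlx0 : l x0 = (1-θ) * l a + θ * l b := by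
    rw [← hx0eq]
    have := l.apply_lineMap a b θ
    rw [AffineMap.lineMap_apply_module, AffineMap.lineMap_apply_module] at this
    rw [this]; simp [smul_eq_mul]
  have hmin : min (l a) (l b) ≤ l x0 := by
    rw [hlx0]
    exact Convex.min_le_combo (l a) (l b) (by linarith) hθ0 (by ring)
  have hAa := hA a ⟨haS, haP⟩
  have hAb := hA b ⟨hbS, hbP⟩
  calc A ≤ ((min (l a) (l b) : ℝ) : EReal) := by
        rcases min_cases (l a) (l b) with ⟨h, _⟩ | ⟨h, _⟩ <;> rw [h] <;> assumption
    _ ≤ (l x0 : EReal) := EReal.coe_le_coe_iff.mpr hmin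

lemma ereal_cases (w : EReal) (hw : w ≠ ⊤) : w = ⊥ ∨ ∃ t : ℝ, w = (t : EReal) := by
  rcases eq_or_ne w ⊥ with rfl | hb
  · exact Or.inl rfl
  · exact Or.inr ⟨w.toReal, (EReal.coe_toReal hw hb).symm⟩

lemma erealExt_bot (φ : ℝ → ℝ) : erealExt φ ⊥ = ⨅ s : ℝ, (φ s : EReal) := by simp [erealExt]

lemma erealExt_coe (φ : ℝ → ℝ) (t : ℝ) : erealExt φ (t : EReal) = (φ t : EReal) := by
  simp [erealExt]

lemma erealExt_ne_top (φ : ℝ → ℝ) {w : EReal} (hw : w ≠ ⊤) : erealExt φ w ≠ ⊤ := by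
  rcases ereal_cases w hw with rfl | ⟨t, rfl⟩
  · rw [erealExt_bot]
    exact ne_top_of_le_ne_top (EReal.coe_ne_top (φ 0)) (iInf_le _ 0)
  · rw [erealExt_coe]; exact EReal.coe_ne_top _

lemma erealExt_le_coe (φ : ℝ → ℝ) (hφm : Monotone φ) {w : EReal} {s : ℝ} (h : w ≤ (s : EReal)) :
    erealExt φ w ≤ (φ s : EReal) := by
  have hw : w ≠ ⊤ := fun h' => by simp [h'] at h
  rcases ereal_cases w hw with rfl | ⟨t, rfl⟩
  · rw [erealExt_bot]; exact iInf_le _ s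
  · rw [erealExt_coe]
    exact EReal.coe_le_coe_iff.mpr (hφm (EReal.coe_le_coe_iff.mp h))

lemma iInf_le_erealExt (φ : ℝ → ℝ) {w : EReal} (hw : w ≠ ⊤) :
    (⨅ s : ℝ, (φ s : EReal)) ≤ erealExt φ w := by
  rcases ereal_cases w hw with rfl | ⟨t, rfl⟩
  · rw [erealExt_bot]
  · rw [erealExt_coe]; exact iInf_le _ t

lemma usc_comp_erealExt {E : Type*} [NormedAddCommGroup E] [NormedSpace ℝ E]
    {φ : ℝ → ℝ} (hφm : StrictMono φ) (hφc : StrictConvexOn ℝ Set.univ φ)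
    {u : E → EReal} {ω : Set E} (husc : UpperSemicontinuousOn u ω)
    (hne : ∀ x ∈ ω, u x ≠ ⊤) :
    UpperSemicontinuousOn (fun x => erealExt φ (u x)) ω := by
  have hcont : Continuous φ := by
    rw [← continuousOn_univ]; exact hφc.convexOn.continuousOn isOpen_univ
  intro x hx y hy
  obtain ⟨s, hus, hφs⟩ : ∃ s : ℝ, u x < (s : EReal) ∧ (φ s : EReal) < y := by
    rcases ereal_cases (u x) (hne x hx) with hbot | ⟨t, ht⟩
    · simp only [hbot, erealExt_bot] at hy
      obtain ⟨s, hs⟩ := iInf_lt_iff.mp hy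
      exact ⟨s, by rw [hbot]; exact bot_lt_iff_ne_bot.mpr (EReal.coe_ne_bot s), hs⟩
    · simp only [ht, erealExt_coe] at hy
      rcases eq_or_ne y ⊤ with rfl | hytop
      · exact ⟨t+1, by rw [ht]; exact_mod_cast lt_add_one t, EReal.coe_lt_top _⟩
      · have hybot : y ≠ ⊥ := fun h => by simp [h] at hy
        obtain ⟨y', rfl⟩ : ∃ y' : ℝ, y = (y' : EReal) :=
          ⟨y.toReal, (EReal.coe_toReal hytop hybot).symm⟩
        have hy' : φ t < y' := EReal.coe_lt_coe_iff.mp hy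
        obtain ⟨s, hts, hsy⟩ : ∃ s : ℝ, t < s ∧ φ s < y' := by
          have hmem : φ ⁻¹' Set.Iio y' ∈ nhds t :=
            hcont.continuousAt.preimage_mem_nhds (Iio_mem_nhds hy')
          obtain ⟨ε, hε, hball⟩ := Metric.mem_nhds_iff.mp hmem
          refine ⟨t + ε/2, by linarith, ?_⟩
          apply hball
          rw [Metric.mem_ball, Real.dist_eq, abs_of_nonneg (by linarith)]; linarith
        exact ⟨s, by rw [ht]; exact_mod_cast hts, by exact_mod_cast hsy⟩
  filter_upwards [husc x hx (s : EReal) hus] with z hz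
  exact lt_of_le_of_lt (erealExt_le_coe φ hφm.monotone hz.le) hφs

/-- If `u` is real q-convex on `ω` and `φ : ℝ → ℝ` is strictly increasing and strictly
convex (extended to `−∞` by its limit), then `φ ∘ u` is real q-convex on `ω`. -/
theorem realQConvexOn_comp_strictConvex {n q : ℕ}
    (ω : Set (EuclideanSpace ℝ (Fin n))) (hω : IsOpen ω)
    (u : EuclideanSpace ℝ (Fin n) → EReal) (hu : RealQConvexOn q u ω)
    (φ : ℝ → ℝ) (hφm : StrictMono φ) (hφc : StrictConvexOn ℝ Set.univ φ) :
    RealQConvexOn q (fun x => erealExt φ (u x)) ω := by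
  obtain ⟨hne, husc, hmax⟩ := hu
  refine ⟨fun x hx => erealExt_ne_top φ (hne x hx),
    usc_comp_erealExt hφm hφc husc hne, ?_⟩
  intro P hdim c r hr hsub l hl x0 hx0
  have hcb : Metric.closedBall c r ⊆ ω := by
    rwa [closure_ball c hr.ne'] at hsub
  have hsph : Metric.sphere c r ⊆ ω := fun x hx => hcb (sphere_subset_closedBall hx)
  have hPdir : P.direction ≠ ⊥ := by
    intro h
    rw [h] at hdim
    simp [finrank_bot] at hdim
  show erealExt φ (u x0) ≤ (l x0 : EReal)
  rcases ereal_cases (u x0) (hne x0 (hcb hx0.1)) with hbot | ⟨t0, ht0⟩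
  · rw [hbot, erealExt_bot]
    apply affine_min_principle P hPdir hr l _ ?_ hx0
    intro x hxmem
    exact le_trans (iInf_le_erealExt φ (hne x (hsph hxmem.1))) (hl x hxmem)
  · rw [ht0, erealExt_coe]
    by_contra hcon
    rw [not_le] at hcon
    have hcon' : (l x0 : ℝ) < φ t0 := EReal.coe_lt_coe_iff.mp hcon
    obtain ⟨α, β, hα, hlt, habove⟩ := exists_affine_above hφm hφc hcon'
    set H : EuclideanSpace ℝ (Fin n) →ᵃ[ℝ] ℝ := α • l + AffineMap.const ℝ _ β with hH
    have hHval : ∀ x, H x = α * l x + β := by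
      intro x; simp [hH, smul_eq_mul]
    have hHl : ∀ x ∈ Metric.sphere c r ∩ (P : Set (EuclideanSpace ℝ (Fin n))),
        u x ≤ (H x : EReal) := by
      intro x hxmem
      rcases ereal_cases (u x) (hne x (hsph hxmem.1)) with hb | ⟨s, hs⟩
      · rw [hb]; exact bot_le
      · have h1 := hl x hxmem
        simp only [hs, erealExt_coe] at h1
        rw [hs, hHval]
        exact EReal.coe_le_coe_iff.mpr (habove s _ (EReal.coe_le_coe_iff.mp h1))
    have h2 := hmax P hdim c r hr hsub H hHl x0 hx0
    rw [ht0, hHval] at h2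
    have h3 := EReal.coe_le_coe_iff.mp h2
    linarith
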